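/- Let Q ∈ ℤ[X] be a monic polynomial of degree d ≥ 2 that is irreducible over ℚ, all of whose complex roots are real, with exactly one root strictly greater than 4 and the remaining d−1 roots lying in the open interval (0,4). Define P(X) = X^d · Q(X + X⁻¹ + 2) ∈ ℤ[X]. Then P is a monic integer polynomial of degree 2d, irreducible over ℚ, P has exactly one complex root τ of modulus strictly greater than 1, this root τ is real and satisfies τ > 1, every other complex root of P has modulus at most 1, at least one root of P has modulus exactly 1 (so τ is a Salem number of degree 2d), and the sum of the roots of P equals (sum of the roots of Q) − 2d. -/

import Mathlib

open Polynomial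

private lemma quad_monic (q : ℂ) : (X ^ 2 - C (q - 2) * X + C 1 : ℂ[X]).Monic := by
  monicity!

private lemma quad_natDegree (q : ℂ) :
    (X ^ 2 - C (q - 2) * X + C 1 : ℂ[X]).natDegree = 2 := by
  compute_degree!

private lemma quad_pair (q : ℂ) :
    ∃ a b : ℂ, (X ^ 2 - C (q - 2) * X + C 1 : ℂ[X]).roots = {a, b}
      ∧ a + b = q - 2 ∧ a * b = 1 := by
  set g : ℂ[X] := X ^ 2 - C (q - 2) * X + C 1 with hg
  have hm : g.Monic := quad_monic q
  have hcard : Multiset.card g.roots = 2 := by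
    rw [← quad_natDegree q, ← hg]
    exact splits_iff_card_roots.mp (IsAlgClosed.splits g)
  obtain ⟨a, b, hab⟩ := Multiset.card_eq_two.mp hcard
  have hprod : g = (X - C a) * (X - C b) := by
    have := (IsAlgClosed.splits g).eq_prod_roots_of_monic hm
    rw [hab] at this
    simpa using this
  have hexp : g = X ^ 2 - C (a + b) * X + C (a * b) := by
    rw [hprod, C_add, C_mul]; ring
  rw [hg] at hexp
  have hc1 : q - 2 = a + b := by
    have := congrArg (fun p : ℂ[X] => p.coeff 1) hexp
    simp [coeff_one] at this
    linear_combination -this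
  have hc0 : (1 : ℂ) = a * b := by
    have := congrArg (fun p : ℂ[X] => p.coeff 0) hexp
    simpa [coeff_one] using this
  exact ⟨a, b, hab, hc1.symm, hc0.symm⟩

private lemma pair_small {q a b : ℂ} (him : q.im = 0) (h0 : 0 < q.re) (h4 : q.re < 4)
    (hsum : a + b = q - 2) (hprod : a * b = 1) :
    ‖a‖ = 1 ∧ ‖b‖ = 1 ∧ a.im ≠ 0 ∧ b.im ≠ 0 := by
  have hsre : a.re + b.re = q.re - 2 := by
    have := congrArg Complex.re hsum; simpa using this
  have hsim : a.im + b.im = 0 := by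
    have := congrArg Complex.im hsum; simpa [him] using this
  have hpre : a.re * b.re - a.im * b.im = 1 := by
    have := congrArg Complex.re hprod; simpa [Complex.mul_re] using this
  have hpim : a.re * b.im + a.im * b.re = 0 := by
    have := congrArg Complex.im hprod; simpa [Complex.mul_im] using this
  have hbre : b.re = q.re - 2 - a.re := by linarith
  have hbim : b.im = -a.im := by linarith
  rw [hbre, hbim] at hpre hpim
  have him0 : a.im ≠ 0 := by
    intro h
    rw [h] at hpre
    have e1 : q.re * a.re = (a.re + 1) ^ 2 := by linear_combination hpre
    have e2 : (4 - q.re) * a.re = -((a.re - 1) ^ 2) := by linear_combination -hpre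
    have hx0 : 0 ≤ a.re := by nlinarith [sq_nonneg (a.re + 1)]
    have hx1 : a.re ≤ 0 := by nlinarith [sq_nonneg (a.re - 1)]
    have hz : a.re = 0 := le_antisymm hx1 hx0
    rw [hz] at e1
    norm_num at e1
  have hx : q.re - 2 = 2 * a.re := by
    rcases mul_eq_zero.mp (show a.im * (q.re - 2 - 2 * a.re) = 0 by linear_combination hpim)
      with h | h
    · exact absurd h him0
    · linarith
  have hnorm : a.re * a.re + a.im * a.im = 1 := by nlinarith [hpre]
  have habs : ‖a‖ = 1 := by
    rw [Complex.norm_def, Complex.normSq_apply, hnorm, Real.sqrt_one]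
  have habsb : ‖b‖ = 1 := by
    rw [Complex.norm_def, Complex.normSq_apply, hbre, hbim,
      show q.re - 2 - a.re = a.re by linarith,
      show -a.im * -a.im = a.im * a.im from by ring, hnorm, Real.sqrt_one]
  exact ⟨habs, habsb, him0, by rw [hbim]; simpa using him0⟩

private lemma pair_big {q a b : ℂ} (him : q.im = 0) (h4 : 4 < q.re)
    (hsum : a + b = q - 2) (hprod : a * b = 1) :
    ∃ t u : ℝ, ({a, b} : Multiset ℂ) = {(t : ℂ), (u : ℂ)} ∧ 1 < t ∧ 0 < u ∧ u < 1
      ∧ t * u = 1 := by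
  have hsre : a.re + b.re = q.re - 2 := by
    have := congrArg Complex.re hsum; simpa using this
  have hsim : a.im + b.im = 0 := by
    have := congrArg Complex.im hsum; simpa [him] using this
  have hpre : a.re * b.re - a.im * b.im = 1 := by
    have := congrArg Complex.re hprod; simpa [Complex.mul_re] using this
  have hpim : a.re * b.im + a.im * b.re = 0 := by
    have := congrArg Complex.im hprod; simpa [Complex.mul_im] using this
  have hbre : b.re = q.re - 2 - a.re := by linarith
  have hbim : b.im = -a.im := by linarith
  rw [hbre, hbim] at hpre hpim
  have him0 : a.im = 0 := by
    by_contra h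
    have hx : q.re - 2 = 2 * a.re := by
      rcases mul_eq_zero.mp (show a.im * (q.re - 2 - 2 * a.re) = 0 by linear_combination hpim)
        with h' | h'
      · exact absurd h' h
      · linarith
    nlinarith [sq_nonneg a.im, sq_nonneg (a.re - 1), sq_nonneg (a.re + 1)]
  rw [him0] at hpre hbim
  have hprodre : a.re * b.re = 1 := by rw [hbre]; linear_combination hpre
  have ha : a = (a.re : ℂ) := Complex.ext rfl (by simp [him0])
  have hb : b = (b.re : ℂ) := Complex.ext rfl (by simp [hbim])
  have hm : ({a, b} : Multiset ℂ) = {(a.re : ℂ), (b.re : ℂ)} := by rw [← ha, ← hb]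
  have hbig : ∀ x y : ℝ, x * y = 1 → x + y = q.re - 2 → x ≤ y →
      1 < y ∧ 0 < x ∧ x < 1 := by
    intro x y hxy hs hle
    have hy0 : 0 < y := by linarith
    have hy1 : 1 < y := by linarith
    have hx0 : 0 < x := by nlinarith
    have hx1 : x < 1 := by nlinarith
    exact ⟨hy1, hx0, hx1⟩
  rcases le_total a.re b.re with hle | hle
  · obtain ⟨h1, h2, h3⟩ := hbig a.re b.re hprodre hsre hle
    exact ⟨b.re, a.re, hm.trans (Multiset.pair_comm _ _), h1, h2, h3,
      by rw [mul_comm]; exact hprodre⟩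
  · obtain ⟨h1, h2, h3⟩ := hbig b.re a.re (by rw [mul_comm]; exact hprodre) (by linarith) hle
    exact ⟨a.re, b.re, hm, h1, h2, h3, hprodre⟩

set_option maxHeartbeats 1600000 in
open IntermediateField in
theorem salem_from_totally_positive
    (d : ℕ) (hd : 2 ≤ d) (Q : Polynomial ℤ) (hQmonic : Q.Monic)
    (hQdeg : Q.natDegree = d)
    (hQirr : Irreducible (Q.map (Int.castRingHom ℚ)))
    (hQreal : ∀ z ∈ Q.aroots ℂ, z.im = 0)
    (hQbig : ((Q.aroots ℂ).filter fun z => 4 < z.re).card = 1)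
    (hQsmall : ((Q.aroots ℂ).filter fun z => 0 < z.re ∧ z.re < 4).card = d - 1)
    (P : Polynomial ℤ)
    (hP : P = ∑ i ∈ Finset.range (d + 1),
      C (Q.coeff i) * (X + 1) ^ (2 * i) * X ^ (d - i)) :
    P.Monic ∧ P.natDegree = 2 * d ∧
    Irreducible (P.map (Int.castRingHom ℚ)) ∧
    (∃ τ : ℂ, τ ∈ P.aroots ℂ ∧ τ.im = 0 ∧ 1 < τ.re ∧
      1 < ‖τ‖ ∧
      ((P.aroots ℂ).filter fun z => 1 < ‖z‖).card = 1 ∧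
      (∀ z ∈ P.aroots ℂ, z ≠ τ → ‖z‖ ≤ 1) ∧
      (∃ z ∈ P.aroots ℂ, ‖z‖ = 1)) ∧
    (P.aroots ℂ).sum = (Q.aroots ℂ).sum - 2 * d := by
  set QC : ℂ[X] := Q.map (Int.castRingHom ℂ) with hQC
  have hQCmonic : QC.Monic := hQmonic.map _
  have hQCdeg : QC.natDegree = d := by rw [hQC, hQmonic.natDegree_map, hQdeg]
  have haroots : Q.aroots ℂ = QC.roots := by rw [aroots_def, algebraMap_int_eq]
  rw [haroots] at hQreal hQbig hQsmall
  have hQCcard : Multiset.card QC.roots = d := by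
    rw [← hQCdeg]
    exact splits_iff_card_roots.mp (IsAlgClosed.splits QC)
  set PC : ℂ[X] := P.map (Int.castRingHom ℂ) with hPC
  have hParoots : P.aroots ℂ = PC.roots := by rw [aroots_def, algebraMap_int_eq]
  set GF : ℂ[X] := (QC.roots.map fun r => X ^ 2 - C (r - 2) * X + C 1).prod with hGF
  have hmon : ∀ f ∈ QC.roots.map (fun r : ℂ => X ^ 2 - C (r - 2) * X + C 1), f.Monic := by
    intro f hf
    obtain ⟨r, _, rfl⟩ := Multiset.mem_map.mp hf
    exact quad_monic r
  have hGFmonic : GF.Monic := monic_multiset_prod_of_monic _ _ fun r _ => quad_monic r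
  have hGFdeg : GF.natDegree = 2 * d := by
    rw [hGF, natDegree_multiset_prod_of_monic _ hmon, Multiset.map_map]
    have : Multiset.map (natDegree ∘ fun r : ℂ => X ^ 2 - C (r - 2) * X + C 1) QC.roots
        = Multiset.map (fun _ : ℂ => 2) QC.roots :=
      Multiset.map_congr rfl fun r _ => quad_natDegree r
    rw [this, Multiset.map_const', Multiset.sum_replicate, hQCcard, smul_eq_mul]
    omega
  -- key evaluation identity
  have heval : ∀ x : ℂ, x ≠ 0 → eval x PC = eval x GF := by
    intro x hx
    have e1 : eval x PC = ∑ i ∈ Finset.range (d + 1),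
        (Q.coeff i : ℂ) * (x + 1) ^ (2 * i) * x ^ (d - i) := by
      rw [hPC, hP]
      simp [Polynomial.map_sum, eval_finset_sum]
    have e2 : ∀ i ∈ Finset.range (d + 1), (Q.coeff i : ℂ) * (x + 1) ^ (2 * i) * x ^ (d - i)
        = ((Q.coeff i : ℂ) * ((x + 1) ^ 2 / x) ^ i) * x ^ d := by
      intro i hi
      have hid : i ≤ d := Nat.lt_succ_iff.mp (Finset.mem_range.mp hi)
      rw [div_pow, ← pow_mul, pow_sub₀ x hx hid]
      field_simp
    have e4 : (∑ i ∈ Finset.range (d + 1), (Q.coeff i : ℂ) * ((x + 1) ^ 2 / x) ^ i)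
        = eval ((x + 1) ^ 2 / x) QC := by
      rw [eval_eq_sum_range, hQCdeg]
      refine Finset.sum_congr rfl fun i _ => ?_
      rw [hQC, coeff_map]
      rfl
    have e5 : eval ((x + 1) ^ 2 / x) QC
        = (QC.roots.map fun r => (x + 1) ^ 2 / x - r).prod := by
      conv_lhs => rw [(IsAlgClosed.splits QC).eq_prod_roots_of_monic
        hQCmonic]
      rw [eval_multiset_prod, Multiset.map_map]
      simp [Function.comp]
    calc eval x PC = ∑ i ∈ Finset.range (d + 1),
          ((Q.coeff i : ℂ) * ((x + 1) ^ 2 / x) ^ i) * x ^ d := by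
            rw [e1]; exact Finset.sum_congr rfl e2
      _ = (∑ i ∈ Finset.range (d + 1), (Q.coeff i : ℂ) * ((x + 1) ^ 2 / x) ^ i) * x ^ d := by
            rw [Finset.sum_mul]
      _ = (QC.roots.map fun r => (x + 1) ^ 2 / x - r).prod * x ^ d := by rw [e4, e5]
      _ = (QC.roots.map fun r => (x + 1) ^ 2 / x - r).prod
            * (QC.roots.map fun _ => x).prod := by
            rw [Multiset.map_const', Multiset.prod_replicate, hQCcard]
      _ = (QC.roots.map fun r => ((x + 1) ^ 2 / x - r) * x).prod := by
            rw [Multiset.prod_map_mul]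
      _ = (QC.roots.map fun r => eval x (X ^ 2 - C (r - 2) * X + C 1)).prod := by
            refine congrArg _ (Multiset.map_congr rfl fun r _ => ?_)
            simp only [eval_add, eval_sub, eval_pow, eval_mul, eval_X, eval_C, eval_one]
            field_simp
            ring
      _ = eval x GF := by rw [hGF, eval_multiset_prod, Multiset.map_map]; rfl
  have hPCGF : PC = GF := by
    have hinf : {x : ℂ | (PC - GF).IsRoot x}.Infinite := by
      refine Set.Infinite.mono ?_ ((Set.finite_singleton (0 : ℂ)).infinite_compl)
      intro x hx
      simp only [Set.mem_setOf_eq, IsRoot.def, eval_sub]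
      rw [heval x hx, sub_self]
    exact sub_eq_zero.mp (eq_zero_of_infinite_isRoot _ hinf)
  have hPCmonic : PC.Monic := hPCGF ▸ hGFmonic
  have hinj : Function.Injective ⇑(Int.castRingHom ℂ) := fun x y h =>
    Int.cast_injective (α := ℂ) (by simpa using h)
  have hPmonic : P.Monic := monic_of_injective hinj hPCmonic
  have hPdeg : P.natDegree = 2 * d := by
    rw [← natDegree_map_eq_of_injective hinj P, ← hPC, hPCGF, hGFdeg]
  have h0nm : (0 : ℂ[X]) ∉ QC.roots.map fun r : ℂ => X ^ 2 - C (r - 2) * X + C 1 := by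
    intro h
    obtain ⟨r, _, hr⟩ := Multiset.mem_map.mp h
    exact (quad_monic r).ne_zero hr
  have hroots : PC.roots
      = QC.roots.bind fun r => (X ^ 2 - C (r - 2) * X + C 1 : ℂ[X]).roots := by
    rw [hPCGF, hGF, roots_multiset_prod _ h0nm, Multiset.bind_map]
  -- partition of the roots of Q
  have hfilterPR : QC.roots.filter (fun z => 4 < z.re)
      + QC.roots.filter (fun z => 0 < z.re ∧ z.re < 4) = QC.roots := by
    have h1 := Multiset.filter_add_filter (fun z : ℂ => 4 < z.re)
      (fun z : ℂ => 0 < z.re ∧ z.re < 4) QC.roots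
    have h2 : QC.roots.filter (fun z : ℂ => 4 < z.re ∧ (0 < z.re ∧ z.re < 4)) = 0 :=
      Multiset.filter_eq_nil.mpr fun z _ h => by linarith [h.1, h.2.2]
    rw [h2, add_zero] at h1
    rw [h1]
    refine Multiset.eq_of_le_of_card_le (Multiset.filter_le _ _) ?_
    have h3 : Multiset.card (QC.roots.filter
        (fun z : ℂ => 4 < z.re ∨ (0 < z.re ∧ z.re < 4))) = d := by
      rw [← h1, Multiset.card_add, hQbig, hQsmall]
      omega
    rw [h3, hQCcard]
  obtain ⟨q₁, hq₁⟩ := Multiset.card_eq_one.mp hQbig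
  have hq₁mem' : q₁ ∈ QC.roots.filter (fun z : ℂ => 4 < z.re) :=
    hq₁ ▸ Multiset.mem_singleton_self q₁
  have hq₁mem : q₁ ∈ QC.roots := Multiset.mem_of_mem_filter hq₁mem'
  have hq₁re : 4 < q₁.re := (Multiset.mem_filter.mp hq₁mem').2
  have hq₁im : q₁.im = 0 := hQreal q₁ hq₁mem
  obtain ⟨a₁, b₁, hr₁, hsum₁, hprod₁⟩ := quad_pair q₁
  obtain ⟨t, u, hpair, ht1, hu0, hu1, htu⟩ := pair_big hq₁im hq₁re hsum₁ hprod₁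
  have hsplit : PC.roots = ({(t : ℂ), (u : ℂ)} : Multiset ℂ)
      + (QC.roots.filter fun z : ℂ => 0 < z.re ∧ z.re < 4).bind
        (fun r => (X ^ 2 - C (r - 2) * X + C 1 : ℂ[X]).roots) := by
    conv_lhs => rw [hroots, ← hfilterPR, Multiset.add_bind, hq₁,
      Multiset.singleton_bind, hr₁, hpair]
  have hsmall_all : ∀ z ∈ (QC.roots.filter fun z : ℂ => 0 < z.re ∧ z.re < 4).bind
      (fun r => (X ^ 2 - C (r - 2) * X + C 1 : ℂ[X]).roots),
      ‖z‖ = 1 ∧ z.im ≠ 0 := by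
    intro z hz
    obtain ⟨r, hrmem, hzr⟩ := Multiset.mem_bind.mp hz
    have hrmem' : r ∈ QC.roots := Multiset.mem_of_mem_filter hrmem
    have hrprop : 0 < r.re ∧ r.re < 4 := (Multiset.mem_filter.mp hrmem).2
    obtain ⟨a, b, hr, hs, hp⟩ := quad_pair r
    obtain ⟨ha, hb, hia, hib⟩ := pair_small (hQreal r hrmem') hrprop.1 hrprop.2 hs hp
    rw [hr] at hzr
    rcases Multiset.mem_cons.mp hzr with h | h
    · subst h; exact ⟨ha, hia⟩
    · rw [Multiset.mem_singleton.mp h]; exact ⟨hb, hib⟩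
  have htabs : ‖(t : ℂ)‖ = t := by
    rw [Complex.norm_real, Real.norm_eq_abs, abs_of_pos (by linarith)]
  have huabs : ‖(u : ℂ)‖ = u := by
    rw [Complex.norm_real, Real.norm_eq_abs, abs_of_pos hu0]
  have hτmem : (t : ℂ) ∈ PC.roots := by
    rw [hsplit]
    exact Multiset.mem_add.mpr (Or.inl (Multiset.mem_cons_self _ _))
  have hfilterτ : PC.roots.filter (fun z => 1 < ‖z‖) = {(t : ℂ)} := by
    rw [hsplit, Multiset.filter_add]
    have h1 : ({(t : ℂ), (u : ℂ)} : Multiset ℂ).filter (fun z => 1 < ‖z‖)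
        = {(t : ℂ)} := by
      rw [show ({(t : ℂ), (u : ℂ)} : Multiset ℂ) = (t : ℂ) ::ₘ {(u : ℂ)} from rfl,
        Multiset.filter_cons_of_pos _ (by rw [htabs]; exact ht1),
        show ({(u : ℂ)} : Multiset ℂ) = (u : ℂ) ::ₘ 0 from rfl,
        Multiset.filter_cons_of_neg _ (by rw [huabs]; exact not_lt.mpr hu1.le),
        Multiset.filter_zero, Multiset.cons_zero]
    have h2 : ((QC.roots.filter fun z : ℂ => 0 < z.re ∧ z.re < 4).bind
        (fun r => (X ^ 2 - C (r - 2) * X + C 1 : ℂ[X]).roots)).filter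
          (fun z => 1 < ‖z‖) = 0 :=
      Multiset.filter_eq_nil.mpr fun z hz h => by
        rw [(hsmall_all z hz).1] at h; exact lt_irrefl 1 h
    rw [h1, h2, add_zero]
  -- sum of roots
  have hsumroots : PC.roots.sum = QC.roots.sum - 2 * d := by
    rw [hroots, Multiset.sum_bind]
    have : QC.roots.map (fun r => ((X ^ 2 - C (r - 2) * X + C 1 : ℂ[X]).roots).sum)
        = QC.roots.map (fun r => r - 2) :=
      Multiset.map_congr rfl fun r _ => by
        obtain ⟨a, b, hr, hs, hp⟩ := quad_pair r
        rw [hr]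
        simpa using hs
    rw [this, Multiset.sum_map_sub, Multiset.map_id', Multiset.map_const',
      Multiset.sum_replicate, hQCcard, nsmul_eq_mul]
    ring
  -- the small root used for irreducibility and the |z| = 1 witness
  have hexists_small : ∃ r, r ∈ QC.roots.filter fun z : ℂ => 0 < z.re ∧ z.re < 4 :=
    Multiset.card_pos_iff_exists_mem.mp (by rw [hQsmall]; omega)
  obtain ⟨q₂, hq₂mem⟩ := hexists_small
  have hq₂root : q₂ ∈ QC.roots := Multiset.mem_of_mem_filter hq₂mem
  have hq₂prop : 0 < q₂.re ∧ q₂.re < 4 := (Multiset.mem_filter.mp hq₂mem).2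
  have hq₂im : q₂.im = 0 := hQreal q₂ hq₂root
  obtain ⟨a, b, hrq₂, hsq₂, hpq₂⟩ := quad_pair q₂
  obtain ⟨haabs, hbabs, haim, hbim⟩ := pair_small hq₂im hq₂prop.1 hq₂prop.2 hsq₂ hpq₂
  have hamem : a ∈ PC.roots := by
    rw [hroots]
    exact Multiset.mem_bind.mpr ⟨q₂, hq₂root, by rw [hrq₂]; exact Multiset.mem_cons_self _ _⟩
  have ha0 : a ≠ 0 := by
    intro h
    rw [h] at haabs
    simp at haabs
  have haq : a ^ 2 - (q₂ - 2) * a + 1 = 0 := by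
    have h := isRoot_of_mem_roots (p := (X ^ 2 - C (q₂ - 2) * X + C 1 : ℂ[X]))
      (by rw [hrq₂]; exact Multiset.mem_cons_self _ _)
    simpa [IsRoot] using h
  have hq₂a : q₂ = a + a⁻¹ + 2 := by
    field_simp
    linear_combination -haq
  -- Irreducibility
  set Pq : ℚ[X] := P.map (Int.castRingHom ℚ) with hPq
  have hPqmonic : Pq.Monic := hPmonic.map _
  have hPqdeg : Pq.natDegree = 2 * d := by rw [hPq, hPmonic.natDegree_map, hPdeg]
  have hmapPC : Pq.map (algebraMap ℚ ℂ) = PC := by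
    rw [hPq, hPC, Polynomial.map_map]
    congr 1
  have haevalP : (aeval a) Pq = 0 := by
    rw [aeval_def, eval₂_eq_eval_map, hmapPC]
    exact isRoot_of_mem_roots hamem
  have haint : IsIntegral ℚ a := ⟨Pq, hPqmonic, by rw [← aeval_def]; exact haevalP⟩
  have hMdvd : minpoly ℚ a ∣ Pq := minpoly.dvd ℚ a haevalP
  have hMdegle : (minpoly ℚ a).natDegree ≤ 2 * d := by
    rw [← hPqdeg]
    exact natDegree_le_of_dvd hMdvd hPqmonic.ne_zero
  set Qq : ℚ[X] := Q.map (Int.castRingHom ℚ) with hQq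
  have hQqmonic : Qq.Monic := hQmonic.map _
  have hQqdeg : Qq.natDegree = d := by rw [hQq, hQmonic.natDegree_map, hQdeg]
  have hmapQC : Qq.map (algebraMap ℚ ℂ) = QC := by
    rw [hQq, hQC, Polynomial.map_map]
    congr 1
  have haevalQ : (aeval q₂) Qq = 0 := by
    rw [aeval_def, eval₂_eq_eval_map, hmapQC]
    exact isRoot_of_mem_roots hq₂root
  have hq₂int : IsIntegral ℚ q₂ := ⟨Qq, hQqmonic, by rw [← aeval_def]; exact haevalQ⟩
  have hminq₂ : minpoly ℚ q₂ = Qq :=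
    (minpoly.eq_of_irreducible_of_monic hQirr haevalQ hQqmonic).symm
  haveI hFD : FiniteDimensional ℚ ℚ⟮q₂⟯ := IntermediateField.adjoin.finiteDimensional hq₂int
  have hFrank : Module.finrank ℚ ℚ⟮q₂⟯ = d := by
    rw [IntermediateField.adjoin.finrank hq₂int, hminq₂, hQqdeg]
  -- the real subfield
  set K : IntermediateField ℚ ℂ := Subfield.toIntermediateField Complex.ofRealHom.fieldRange
    (fun x => ⟨(x : ℝ), by simp⟩) with hK
  have hKreal : ∀ x : ℂ, x ∈ K → x.im = 0 := by
    intro x hx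
    obtain ⟨y, hy⟩ := hx
    rw [← hy]
    simp
  have hFK : ℚ⟮q₂⟯ ≤ K := by
    refine IntermediateField.adjoin_le_iff.mpr (Set.singleton_subset_iff.mpr ?_)
    exact ⟨q₂.re, Complex.ext rfl (by simp [hq₂im])⟩
  have haF : a ∉ ℚ⟮q₂⟯ := fun h => haim (hKreal a (hFK h))
  have haintF : IsIntegral ℚ⟮q₂⟯ a := IsIntegral.tower_top haint
  haveI hFD2 : FiniteDimensional ℚ⟮q₂⟯ ℚ⟮q₂⟯⟮a⟯ :=
    IntermediateField.adjoin.finiteDimensional haintF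
  have h2le : 2 ≤ Module.finrank ℚ⟮q₂⟯ ℚ⟮q₂⟯⟮a⟯ := by
    by_contra h
    push_neg at h
    have hpos : 0 < Module.finrank ℚ⟮q₂⟯ ℚ⟮q₂⟯⟮a⟯ := Module.finrank_pos
    have h1 : Module.finrank ℚ⟮q₂⟯ ℚ⟮q₂⟯⟮a⟯ = 1 := by omega
    have hbot := IntermediateField.finrank_eq_one_iff.mp h1
    have hmem : a ∈ (⊥ : IntermediateField ℚ⟮q₂⟯ ℂ) :=
      hbot ▸ IntermediateField.mem_adjoin_simple_self ℚ⟮q₂⟯ a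
    obtain ⟨y, hy⟩ := IntermediateField.mem_bot.mp hmem
    exact haF (hy ▸ y.2)
  have hFle : ℚ⟮q₂⟯ ≤ ℚ⟮a⟯ := by
    refine IntermediateField.adjoin_le_iff.mpr (Set.singleton_subset_iff.mpr ?_)
    rw [hq₂a]
    have hmem := IntermediateField.mem_adjoin_simple_self ℚ a
    have h2 : (2 : ℂ) ∈ ℚ⟮a⟯ := by
      have := IntermediateField.algebraMap_mem ℚ⟮a⟯ (2 : ℚ)
      simpa using this
    exact add_mem (add_mem hmem (inv_mem hmem)) h2
  have hrestrict : IntermediateField.restrictScalars ℚ ℚ⟮q₂⟯⟮a⟯ = ℚ⟮a⟯ := by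
    exact (IntermediateField.restrictScalars_adjoin_eq_sup (K := ℚ⟮q₂⟯) (S := ({a} : Set ℂ))).trans
      (sup_eq_right.mpr hFle)
  have hrank : Module.finrank ℚ ℚ⟮a⟯
      = Module.finrank ℚ ℚ⟮q₂⟯ * Module.finrank ℚ⟮q₂⟯ ℚ⟮q₂⟯⟮a⟯ := by
    have h1 : Module.finrank ℚ ℚ⟮q₂⟯ * Module.finrank ℚ⟮q₂⟯ ℚ⟮q₂⟯⟮a⟯
        = Module.finrank ℚ ↥ℚ⟮q₂⟯⟮a⟯ := Module.finrank_mul_finrank ℚ ℚ⟮q₂⟯ ℚ⟮q₂⟯⟮a⟯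
    have h2 : Module.finrank ℚ ↥(IntermediateField.restrictScalars ℚ ℚ⟮q₂⟯⟮a⟯)
        = Module.finrank ℚ ↥ℚ⟮q₂⟯⟮a⟯ := rfl
    rw [hrestrict] at h2
    rw [h1, ← h2]
  have hMdeg : (minpoly ℚ a).natDegree = Module.finrank ℚ ℚ⟮a⟯ :=
    (IntermediateField.adjoin.finrank haint).symm
  have h2dle : 2 * d ≤ (minpoly ℚ a).natDegree := by
    rw [hMdeg, hrank, hFrank]
    calc 2 * d = d * 2 := by ring
      _ ≤ d * Module.finrank ℚ⟮q₂⟯ ℚ⟮q₂⟯⟮a⟯ := Nat.mul_le_mul_left d h2le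
  have hMdeg2d : (minpoly ℚ a).natDegree = 2 * d := le_antisymm hMdegle h2dle
  have hPqM : Pq = minpoly ℚ a := by
    obtain ⟨c, hc⟩ := hMdvd
    have hM0 : minpoly ℚ a ≠ 0 := minpoly.ne_zero haint
    have hc0 : c ≠ 0 := by
      intro h
      rw [h, mul_zero] at hc
      exact hPqmonic.ne_zero hc
    have hcdeg : c.natDegree = 0 := by
      have hmul := natDegree_mul hM0 hc0
      rw [← hc, hPqdeg, hMdeg2d] at hmul
      omega
    obtain ⟨γ, hγ⟩ := natDegree_eq_zero.mp hcdeg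
    have hγ1 : γ = 1 := by
      have hlead := congrArg leadingCoeff hc
      rw [hPqmonic.leadingCoeff, leadingCoeff_mul, (minpoly.monic haint).leadingCoeff,
        one_mul, ← hγ, leadingCoeff_C] at hlead
      exact hlead.symm
    rw [hc, ← hγ, hγ1, map_one, mul_one]
  have hIrr : Irreducible Pq := hPqM ▸ minpoly.irreducible haint
  refine ⟨hPmonic, hPdeg, hIrr, ⟨(t : ℂ), ?_, by simp, by simpa using ht1,
    by rw [htabs]; exact ht1, ?_, ?_, ?_⟩, ?_⟩
  · rw [hParoots]; exact hτmem
  · rw [hParoots, hfilterτ]; rfl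
  · intro z hz hne
    by_contra hgt
    push_neg at hgt
    have hzf : z ∈ PC.roots.filter (fun z => 1 < ‖z‖) :=
      Multiset.mem_filter.mpr ⟨by rw [← hParoots]; exact hz, hgt⟩
    rw [hfilterτ] at hzf
    exact hne (Multiset.mem_singleton.mp hzf)
  · exact ⟨a, by rw [hParoots]; exact hamem, haabs⟩
  · rw [hParoots, haroots, hsumroots]
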